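/- Let (B,⌊·,·⌋) be an SSD space, ρ : B → B be a linear surjection such that ⌊ρ(b),ρ(c)⌋ = ⌊b,−c⌋ for all b,c ∈ B, and g ∈ PC(B) be a BC-function. Then g∘ρ and g∘(−ρ) are TBC-functions, ρ(dom(g∘ρ)) = dom g, ρ(N_q(g∘ρ)) = P_q(g), −ρ(dom(g∘(−ρ))) = dom g, and −ρ(N_q(g∘(−ρ))) = P_q(g). -/
import Mathlib


noncomputable section

variable {B : Type*} [AddCommGroup B] [Module ℝ B]

/-- The quadratic form `q(b) = ½⌊b,b⌋` associated with a bilinear form. -/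
def qForm (br : B →ₗ[ℝ] B →ₗ[ℝ] ℝ) (b : B) : ℝ := (1 / 2) * br b b

/-- The intrinsic conjugate `f^@(c) = sup_{b} (⌊b,c⌋ - f(b))`. -/
def intrinsicConj (br : B →ₗ[ℝ] B →ₗ[ℝ] ℝ) (f : B → EReal) (c : B) : EReal :=
  ⨆ b : B, ((br b c : ℝ) : EReal) - f b

/-- A proper function from `B` into `(-∞,∞]`: never `⊥` and somewhere finite. -/
def ProperFn (f : B → EReal) : Prop := (∀ b, f b ≠ ⊥) ∧ ∃ b, f b ≠ ⊤

/-- Convexity for `(-∞,∞]`-valued functions. -/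
def ConvexFn (f : B → EReal) : Prop :=
  ∀ b c : B, ∀ t : ℝ, 0 ≤ t → t ≤ 1 →
    f (t • b + (1 - t) • c) ≤ (t : EReal) * f b + ((1 - t : ℝ) : EReal) * f c

/-- `A` is q-positive: nonempty and `q(b - c) ≥ 0` for all `b, c ∈ A`. -/
def QPos (br : B →ₗ[ℝ] B →ₗ[ℝ] ℝ) (A : Set B) : Prop :=
  A.Nonempty ∧ ∀ b ∈ A, ∀ c ∈ A, 0 ≤ qForm br (b - c)

/-- `A` is maximally q-positive. -/
def MaxQPos (br : B →ₗ[ℝ] B →ₗ[ℝ] ℝ) (A : Set B) : Prop :=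
  QPos br A ∧ ∀ C : Set B, QPos br C → A ⊆ C → C = A

/-- `Φ_A(b) = sup_{a ∈ A} (⌊a,b⌋ - q(a))`. -/
def PhiA (br : B →ₗ[ℝ] B →ₗ[ℝ] ℝ) (A : Set B) (b : B) : EReal :=
  ⨆ a : A, ((br (a : B) b - qForm br (a : B) : ℝ) : EReal)

/-- `P_q(f) = {b : f(b) = q(b)}`. -/
def Pq (br : B →ₗ[ℝ] B →ₗ[ℝ] ℝ) (f : B → EReal) : Set B :=
  {b : B | f b = ((qForm br b : ℝ) : EReal)}

/-- `N_q(g) = {b : g(b) = -q(b)}`. -/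
def Nq (br : B →ₗ[ℝ] B →ₗ[ℝ] ℝ) (f : B → EReal) : Set B :=
  {b : B | f b = ((-(qForm br b) : ℝ) : EReal)}

/-- `f` is a BC-function: `f^@(b) ≥ f(b) ≥ q(b)` for all `b`. -/
def IsBC (br : B →ₗ[ℝ] B →ₗ[ℝ] ℝ) (f : B → EReal) : Prop :=
  ∀ b : B, ((qForm br b : ℝ) : EReal) ≤ f b ∧ f b ≤ intrinsicConj br f b

/-- `g` is a TBC-function: `g^@(-b) ≥ g(b) ≥ -q(b)` for all `b`. -/
def IsTBC (br : B →ₗ[ℝ] B →ₗ[ℝ] ℝ) (g : B → EReal) : Prop :=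
  ∀ b : B, ((-(qForm br b) : ℝ) : EReal) ≤ g b ∧ g b ≤ intrinsicConj br g (-b)

/-- The effective domain `dom f = {b : f(b) ∈ ℝ}`. -/
def domE (f : B → EReal) : Set B := {b : B | ∃ r : ℝ, f b = (r : EReal)}


/-- if `ρ` is a linear surjection with `⌊ρ(b),ρ(c)⌋ = ⌊b,-c⌋` and `g` is a
BC-function, then `g∘ρ` and `g∘(-ρ)` are TBC-functions, `ρ(dom(g∘ρ)) = dom g`,
`ρ(N_q(g∘ρ)) = P_q(g)`, `-ρ(dom(g∘(-ρ))) = dom g` and `-ρ(N_q(g∘(-ρ))) = P_q(g)`. -/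
theorem stmt5 [Nontrivial B] (br : B →ₗ[ℝ] B →ₗ[ℝ] ℝ)
    (hsymm : ∀ b c : B, br b c = br c b)
    (ρ : B →ₗ[ℝ] B) (hρsurj : Function.Surjective ρ)
    (hρ : ∀ b c : B, br (ρ b) (ρ c) = br b (-c))
    (g : B → EReal) (hproper : ProperFn g) (hconv : ConvexFn g)
    (hbc : IsBC br g) :
    IsTBC br (fun b : B => g (ρ b)) ∧
    IsTBC br (fun b : B => g (-(ρ b))) ∧
    (fun b : B => ρ b) '' domE (fun b : B => g (ρ b)) = domE g ∧
    (fun b : B => ρ b) '' Nq br (fun b : B => g (ρ b)) = Pq br g ∧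
    (fun b : B => -(ρ b)) '' domE (fun b : B => g (-(ρ b))) = domE g ∧
    (fun b : B => -(ρ b)) '' Nq br (fun b : B => g (-(ρ b))) = Pq br g := by
  have hq : ∀ b : B, qForm br (ρ b) = -(qForm br b) := by
    intro b
    have h := hρ b b
    simp only [map_neg] at h
    simp [qForm, h]
  have hqneg : ∀ x : B, qForm br (-x) = qForm br x := by
    intro x; simp [qForm]
  refine ⟨?_, ?_, ?_, ?_, ?_, ?_⟩
  · -- TBC for g∘ρ
    intro b
    obtain ⟨h1, h2⟩ := hbc (ρ b)
    rw [hq b] at h1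
    refine ⟨h1, h2.trans ?_⟩
    simp only [intrinsicConj]
    apply iSup_le
    intro a
    obtain ⟨c, hc⟩ := hρsurj a
    apply le_iSup_of_le c
    rw [← hρ c b, hc]
  · -- TBC for g∘(-ρ)
    intro b
    obtain ⟨h1, h2⟩ := hbc (-(ρ b))
    rw [hqneg, hq b] at h1
    refine ⟨h1, h2.trans ?_⟩
    simp only [intrinsicConj]
    apply iSup_le
    intro a
    obtain ⟨c, hc⟩ := hρsurj (-a)
    apply le_iSup_of_le c
    rw [← hρ c b, hc]
    simp [map_neg]
  · -- dom image for g∘ρ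
    ext x
    constructor
    · rintro ⟨b, ⟨r, hr⟩, rfl⟩; exact ⟨r, hr⟩
    · rintro ⟨r, hr⟩
      obtain ⟨b, rfl⟩ := hρsurj x
      exact ⟨b, ⟨r, hr⟩, rfl⟩
  · -- Nq image for g∘ρ
    ext x
    constructor
    · rintro ⟨b, hb, rfl⟩
      show g (ρ b) = ((qForm br (ρ b) : ℝ) : EReal)
      rw [hq b]; exact hb
    · intro hx
      obtain ⟨b, rfl⟩ := hρsurj x
      refine ⟨b, ?_, rfl⟩
      show g (ρ b) = ((-(qForm br b) : ℝ) : EReal)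
      rw [← hq b]; exact hx
  · -- dom image for g∘(-ρ)
    ext x
    constructor
    · rintro ⟨b, ⟨r, hr⟩, rfl⟩; exact ⟨r, hr⟩
    · rintro ⟨r, hr⟩
      obtain ⟨b, hb⟩ := hρsurj (-x)
      refine ⟨b, ⟨r, ?_⟩, ?_⟩ <;> simp [hb, hr]
  · -- Nq image for g∘(-ρ)
    ext x
    constructor
    · rintro ⟨b, hb, rfl⟩
      show g (-(ρ b)) = ((qForm br (-(ρ b)) : ℝ) : EReal)
      rw [hqneg, hq b]; exact hb
    · intro hx
      obtain ⟨b, hb⟩ := hρsurj (-x)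
      have hx' : -(ρ b) = x := by rw [hb]; simp
      refine ⟨b, ?_, hx'⟩
      show g (-(ρ b)) = ((-(qForm br b) : ℝ) : EReal)
      rw [← hq b, ← hqneg (ρ b), hx']
      exact hx
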